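/- Let R be a nontrivial commutative ring whose only idempotent elements are 0 and 1, and let D be an abelian group. Then the group-like elements of the group algebra R[D] = AddMonoidAlgebra R D are exactly the basis elements χ^d for d ∈ D: an element α ∈ R[D] satisfies α ≠ 0 and Δ(α) = α ⊗ α (where Δ: R[D] → R[D] ⊗_R R[D] is the comultiplication with Δ(χ^d) = χ^d ⊗ χ^d) if and only if α = χ^d for some d ∈ D. -/

import Mathlib

open scoped TensorProduct

/-- Let `R` be a nontrivial commutative ring whose only idempotents are `0` and
`1`, and let `D` be an abelian group.  Let `Δ : R[D] → R[D] ⊗[R] R[D]` be the comultiplication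
of the group algebra `R[D] = AddMonoidAlgebra R D`, i.e. the `R`-linear map determined by
`Δ(χ^d) = χ^d ⊗ χ^d`.  Then an element `α ∈ R[D]` is group-like (`α ≠ 0` and `Δ α = α ⊗ α`)
if and only if `α = χ^d` for some `d ∈ D`. -/
theorem stmt_14 {R D : Type*} [CommRing R] [Nontrivial R]
    (hidem : ∀ e : R, e * e = e → e = 0 ∨ e = 1)
    [AddCommGroup D]
    (Δ : AddMonoidAlgebra R D →ₗ[R] AddMonoidAlgebra R D ⊗[R] AddMonoidAlgebra R D)
    (hΔ : ∀ d : D, Δ (AddMonoidAlgebra.single d 1) =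
      AddMonoidAlgebra.single d (1 : R) ⊗ₜ AddMonoidAlgebra.single d (1 : R)) :
    ∀ α : AddMonoidAlgebra R D,
      (α ≠ 0 ∧ Δ α = α ⊗ₜ α) ↔ ∃ d : D, α = AddMonoidAlgebra.single d 1 := by
  classical
  intro α
  constructor
  · rintro ⟨hα, h⟩
    obtain ⟨α⟩ := α
    replace hα : α ≠ 0 := fun h0 => hα (by rw [h0]; rfl)
    set E := AddMonoidAlgebra.coeffLinearEquiv (S := R) (M := D) R with hE
    obtain ⟨Δ', hΔ', h'⟩ : ∃ Δ' : (D →₀ R) →ₗ[R] (D →₀ R) ⊗[R] (D →₀ R),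
        (∀ d : D, Δ' (Finsupp.single d 1) = Finsupp.single d (1 : R) ⊗ₜ Finsupp.single d (1 : R))
          ∧ Δ' α = α ⊗ₜ α :=
      ⟨TensorProduct.map E.toLinearMap E.toLinearMap ∘ₗ Δ ∘ₗ E.symm.toLinearMap,
        fun d => by
          show TensorProduct.map E.toLinearMap E.toLinearMap (Δ (AddMonoidAlgebra.single d 1)) = _
          rw [hΔ d, TensorProduct.map_tmul]; rfl,
        by
          show TensorProduct.map E.toLinearMap E.toLinearMap (Δ (AddMonoidAlgebra.ofCoeff α)) = _
          rw [h, TensorProduct.map_tmul]; rfl⟩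
    clear h hΔ
    clear Δ
    rename' Δ' => Δ, hΔ' => hΔ, h' => h
    -- compute Δ α explicitly
    have hΔα : Δ α = α.sum fun d r =>
        (Finsupp.single d r : D →₀ R) ⊗ₜ[R]
          (Finsupp.single d (1 : R) : D →₀ R) := by
      conv_lhs => rw [← α.sum_single]
      rw [map_finsuppSum]
      refine Finsupp.sum_congr fun d _ => ?_
      have h1 : (Finsupp.single d (α d) : D →₀ R)
          = α d • (Finsupp.single d (1 : R)) := by
        rw [Finsupp.smul_single, smul_eq_mul, mul_one]
      show Δ (Finsupp.single d (α d)) = _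
      calc Δ (Finsupp.single d (α d)) = Δ (α d • Finsupp.single d 1) := by rw [h1]
        _ = α d • (Finsupp.single d (1:R) ⊗ₜ[R] Finsupp.single d (1:R)) := by
            rw [map_smul, hΔ d]
        _ = _ := by rw [TensorProduct.smul_tmul', ← h1]
    set T := finsuppTensorFinsupp' R D D with hT
    have key : ∀ d e : D, α d * α e = if d = e then α d else 0 := by
      intro d e
      have h2 : T (Δ α) = T (α ⊗ₜ α) := by rw [h]
      have h3 : T (α ⊗ₜ α) (d, e) = α d * α e :=
        finsuppTensorFinsupp'_apply_apply R D D α α d e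
      have h4 : T (Δ α) (d, e) = if d = e then α d else 0 := by
        have hs : T (∑ a ∈ α.support, (Finsupp.single a (α a) : D →₀ R)
              ⊗ₜ[R] (Finsupp.single a (1 : R) : D →₀ R))
            = ∑ a ∈ α.support, T ((Finsupp.single a (α a) : D →₀ R)
              ⊗ₜ[R] (Finsupp.single a (1 : R) : D →₀ R)) :=
          map_sum (T : (D →₀ R) ⊗[R] (D →₀ R) →+ (D × D →₀ R)) _ _
        rw [hΔα, Finsupp.sum, hs]
        simp only [hT, finsuppTensorFinsupp'_single_tmul_single, mul_one]
        rw [Finset.sum_apply']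
        by_cases hde : d = e
        · subst hde
          rw [if_pos rfl]
          by_cases hd : d ∈ α.support
          · rw [Finset.sum_eq_single d]
            · simp [Finsupp.single_apply]
            · intro b _ hb
              simp [Finsupp.single_apply, Prod.ext_iff, hb]
            · intro h; exact absurd hd h
          · have hd0 : α d = 0 := Finsupp.notMem_support_iff.mp hd
            rw [hd0]
            apply Finset.sum_eq_zero
            intro b hb
            have hbd : b ≠ d := fun hbd => hd (hbd ▸ hb)
            simp [Finsupp.single_apply, Prod.ext_iff, hbd]
        · rw [if_neg hde]
          apply Finset.sum_eq_zero
          intro b _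
          have : (b, b) ≠ (d, e) := by
            intro hbe
            exact hde ((Prod.ext_iff.mp hbe).1.symm.trans (Prod.ext_iff.mp hbe).2)
          simp [Finsupp.single_apply, Prod.ext_iff]
          intro h1 h2
          exact absurd (h1 ▸ h2) hde
      rw [← h3, ← h2, h4]
    obtain ⟨d₀, hd₀⟩ : ∃ d, α d ≠ 0 := by
      by_contra hc
      push_neg at hc
      exact hα (Finsupp.ext fun d => hc d)
    have hidem₀ : α d₀ = 1 := by
      have := key d₀ d₀
      rw [if_pos rfl] at this
      rcases hidem (α d₀) this with h0 | h1
      · exact absurd h0 hd₀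
      · exact h1
    refine ⟨d₀, AddMonoidAlgebra.coeff_injective (Finsupp.ext fun e => ?_)⟩
    by_cases he : e = d₀
    · subst he
      simp [AddMonoidAlgebra.coeff_single, AddMonoidAlgebra.coeff_ofCoeff, Finsupp.single_apply, hidem₀]
    · have := key d₀ e
      rw [if_neg (fun h' => he h'.symm), hidem₀, one_mul] at this
      simp [AddMonoidAlgebra.coeff_single, AddMonoidAlgebra.coeff_ofCoeff, Finsupp.single_apply, Ne.symm he, this]
  · rintro ⟨d, rfl⟩
    exact ⟨fun h0 => one_ne_zero (AddMonoidAlgebra.single_eq_zero.mp h0), hΔ d⟩
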